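/- Fix integers T ≥ 1 and n ≥ 1, matrices A_t ∈ ℝ^{n×n} and symmetric positive definite W_t (t = 0,…,T−1), a symmetric positive definite P_0, and symmetric positive semidefinite Θ_t and reals D_t > 0 (t = 1,…,T). Then the infimum of the max-det objective J(Π_1,…,Π_T) = −Σ_{t=1}^{T} ½ log det Π_t + c over the max-det feasible set F is finite and is attained by some feasible tuple (P_1,…,P_T, Π_1,…,Π_T) ∈ F. -/

import Mathlib

set_option maxHeartbeats 1000000

open Matrix

section mdauxlemmas

variable {n : ℕ}

private lemma mdaux_psd_smul {N : Type*} [Fintype N] {X : Matrix N N ℝ} (hX : X.PosSemidef)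
    {c : ℝ} (hc : 0 ≤ c) : (c • X).PosSemidef := by
  refine ⟨?_, fun x => ?_⟩
  · unfold Matrix.IsHermitian
    rw [conjTranspose_smul, hX.1]; simp
  · exact (hX.smul hc).2 x

private lemma mdaux_psd_mul_mul_transpose {N N' : Type*} [Fintype N] [Fintype N']
    {X : Matrix N N ℝ} (hX : X.PosSemidef) (B : Matrix N' N ℝ) : (B * X * Bᵀ).PosSemidef := by
  simpa [conjTranspose_eq_transpose_of_trivial] using hX.mul_mul_conjTranspose_same B

private lemma mdaux_smul_one_posdef {c : ℝ} (hc : 0 < c) :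
    ((c • 1 : Matrix (Fin n) (Fin n) ℝ)).PosDef := by
  rw [show (c • 1 : Matrix (Fin n) (Fin n) ℝ) = diagonal (fun _ => c) by
    ext i j; by_cases h : i = j <;> simp [h, Matrix.one_apply, Matrix.diagonal]]
  exact Matrix.PosDef.diagonal fun _ => hc

private lemma mdaux_psd_posdef {X : Matrix (Fin n) (Fin n) ℝ} (hX : X.PosSemidef)
    (hd : X.det ≠ 0) : X.PosDef := by
  refine Matrix.PosDef.of_dotProduct_mulVec_pos hX.1 fun x hx => ?_
  rcases lt_or_eq_of_le (hX.dotProduct_mulVec_nonneg x) with h | h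
  · exact h
  · exact absurd ((Matrix.exists_mulVec_eq_zero_iff).mp
      ⟨x, hx, (hX.dotProduct_mulVec_zero_iff x).mp h.symm⟩) hd

private lemma mdaux_conj_diag_psd {X : Matrix (Fin n) (Fin n) ℝ} (hX : X.IsHermitian)
    {f : Fin n → ℝ} (hf : ∀ i, 0 ≤ f i) :
    ((hX.eigenvectorUnitary : Matrix (Fin n) (Fin n) ℝ) * diagonal f *
      (star hX.eigenvectorUnitary : Matrix (Fin n) (Fin n) ℝ)).PosSemidef := by
  have := (Matrix.PosSemidef.diagonal (fun i => hf i)).mul_mul_conjTranspose_same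
    (hX.eigenvectorUnitary : Matrix (Fin n) (Fin n) ℝ)
  simpa [Matrix.star_eq_conjTranspose] using this

private lemma mdaux_trace_eq_sum_eigenvalues {X : Matrix (Fin n) (Fin n) ℝ}
    (hX : X.IsHermitian) : X.trace = ∑ i, hX.eigenvalues i := by
  conv_lhs => rw [hX.spectral_theorem]
  rw [Unitary.conjStarAlgAut_apply]
  rw [Matrix.trace_mul_cycle]
  rw [show (star hX.eigenvectorUnitary : Matrix (Fin n) (Fin n) ℝ) *
      (hX.eigenvectorUnitary : Matrix (Fin n) (Fin n) ℝ) = 1 from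
    (Matrix.mem_unitaryGroup_iff').mp hX.eigenvectorUnitary.2]
  rw [one_mul, trace_diagonal]
  simp

private lemma mdaux_spectral' {X : Matrix (Fin n) (Fin n) ℝ} (hX : X.IsHermitian) :
    (hX.eigenvectorUnitary : Matrix (Fin n) (Fin n) ℝ) *
      diagonal (fun i => hX.eigenvalues i) *
      (star hX.eigenvectorUnitary : Matrix (Fin n) (Fin n) ℝ) = X := by
  conv_rhs => rw [hX.spectral_theorem]
  congr 1

private lemma mdaux_conj_smul_one {X : Matrix (Fin n) (Fin n) ℝ} (hX : X.IsHermitian) (c : ℝ) :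
    (hX.eigenvectorUnitary : Matrix (Fin n) (Fin n) ℝ) * (c • (1 : Matrix (Fin n) (Fin n) ℝ)) *
      (star hX.eigenvectorUnitary : Matrix (Fin n) (Fin n) ℝ) =
      c • (1 : Matrix (Fin n) (Fin n) ℝ) := by
  rw [Matrix.mul_smul, Matrix.mul_one, Matrix.smul_mul]
  rw [show (hX.eigenvectorUnitary : Matrix (Fin n) (Fin n) ℝ) *
      (star hX.eigenvectorUnitary : Matrix (Fin n) (Fin n) ℝ) = 1 from
    (Matrix.mem_unitaryGroup_iff).mp hX.eigenvectorUnitary.2]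

private lemma mdaux_smul_one_sub_psd {X : Matrix (Fin n) (Fin n) ℝ} (hX : X.IsHermitian)
    {c : ℝ} (hc : ∀ i, hX.eigenvalues i ≤ c) :
    (c • (1 : Matrix (Fin n) (Fin n) ℝ) - X).PosSemidef := by
  have h2 : diagonal (fun i => c - hX.eigenvalues i) =
      c • (1 : Matrix (Fin n) (Fin n) ℝ) - diagonal (fun i => hX.eigenvalues i) := by
    ext i j; by_cases h : i = j <;> simp [h, Matrix.one_apply, Matrix.diagonal]
  have key : c • (1 : Matrix (Fin n) (Fin n) ℝ) - X =
      (hX.eigenvectorUnitary : Matrix (Fin n) (Fin n) ℝ) *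
        diagonal (fun i => c - hX.eigenvalues i) *
        (star hX.eigenvectorUnitary : Matrix (Fin n) (Fin n) ℝ) := by
    rw [h2, Matrix.mul_sub, Matrix.sub_mul, mdaux_spectral' hX, mdaux_conj_smul_one hX]
  rw [key]
  exact mdaux_conj_diag_psd hX fun i => sub_nonneg.mpr (hc i)

private lemma mdaux_sub_smul_one_psd {X : Matrix (Fin n) (Fin n) ℝ} (hX : X.IsHermitian)
    {c : ℝ} (hc : ∀ i, c ≤ hX.eigenvalues i) :
    (X - c • (1 : Matrix (Fin n) (Fin n) ℝ)).PosSemidef := by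
  have h2 : diagonal (fun i => hX.eigenvalues i - c) =
      diagonal (fun i => hX.eigenvalues i) - c • (1 : Matrix (Fin n) (Fin n) ℝ) := by
    ext i j; by_cases h : i = j <;> simp [h, Matrix.one_apply, Matrix.diagonal]
  have key : X - c • (1 : Matrix (Fin n) (Fin n) ℝ) =
      (hX.eigenvectorUnitary : Matrix (Fin n) (Fin n) ℝ) *
        diagonal (fun i => hX.eigenvalues i - c) *
        (star hX.eigenvectorUnitary : Matrix (Fin n) (Fin n) ℝ) := by
    rw [h2, Matrix.mul_sub, Matrix.sub_mul, mdaux_spectral' hX, mdaux_conj_smul_one hX]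
  rw [key]
  exact mdaux_conj_diag_psd hX fun i => sub_nonneg.mpr (hc i)

private lemma mdaux_psd_le_trace_one {X : Matrix (Fin n) (Fin n) ℝ} (hX : X.PosSemidef) :
    (X.trace • (1 : Matrix (Fin n) (Fin n) ℝ) - X).PosSemidef := by
  refine mdaux_smul_one_sub_psd hX.1 fun i => ?_
  rw [mdaux_trace_eq_sum_eigenvalues hX.1]
  exact Finset.single_le_sum (fun j _ => hX.eigenvalues_nonneg j) (Finset.mem_univ i)

private lemma mdaux_posdef_sub_smul_one {X : Matrix (Fin n) (Fin n) ℝ} (hn : 0 < n)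
    (hX : X.PosDef) : ∃ ε : ℝ, 0 < ε ∧ (X - ε • (1 : Matrix (Fin n) (Fin n) ℝ)).PosSemidef := by
  have : Nonempty (Fin n) := ⟨⟨0, hn⟩⟩
  refine ⟨Finset.univ.inf' Finset.univ_nonempty hX.1.eigenvalues, ?_, ?_⟩
  · rw [Finset.lt_inf'_iff]
    exact fun i _ => hX.eigenvalues_pos i
  · exact mdaux_sub_smul_one_psd hX.1 fun i => Finset.inf'_le _ (Finset.mem_univ i)

private lemma mdaux_psd_diag_nonneg {X : Matrix (Fin n) (Fin n) ℝ} (hX : X.PosSemidef)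
    (i : Fin n) : 0 ≤ X i i := by
  have := hX.dotProduct_mulVec_nonneg (Pi.single i 1)
  simpa [dotProduct_single, Matrix.mulVec_single] using this

private lemma mdaux_psd_trace_nonneg {X : Matrix (Fin n) (Fin n) ℝ} (hX : X.PosSemidef) :
    0 ≤ X.trace :=
  Finset.sum_nonneg fun i _ => mdaux_psd_diag_nonneg hX i

private lemma mdaux_psd_diag_le_trace {X : Matrix (Fin n) (Fin n) ℝ} (hX : X.PosSemidef)
    (i : Fin n) : X i i ≤ X.trace :=
  Finset.single_le_sum (fun j _ => mdaux_psd_diag_nonneg hX j) (Finset.mem_univ i)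

private lemma mdaux_psd_entry_le_trace {X : Matrix (Fin n) (Fin n) ℝ} (hX : X.PosSemidef)
    (i j : Fin n) : |X i j| ≤ X.trace := by
  rcases eq_or_ne i j with rfl | hij
  · rw [abs_of_nonneg (mdaux_psd_diag_nonneg hX i)]
    exact mdaux_psd_diag_le_trace hX i
  · have hsym : X j i = X i j := by
      have := hX.1
      rw [Matrix.IsHermitian, conjTranspose_eq_transpose_of_trivial] at this
      conv_lhs => rw [← this]
      simp
    have h1 := hX.dotProduct_mulVec_nonneg (Pi.single i 1 + Pi.single j 1)
    have h2 := hX.dotProduct_mulVec_nonneg (Pi.single i 1 - Pi.single j 1)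
    rw [abs_le]
    constructor
    · have e1 : (0:ℝ) ≤ X i i + X j j + 2 * X i j := by
        have := h1
        simp only [star_trivial, Matrix.mulVec_add, Matrix.mulVec_single,
          dotProduct_add, add_dotProduct, single_dotProduct] at this
        simp only [MulOpposite.op_one, one_smul, one_mul, Matrix.col_apply] at this
        nlinarith [this, hsym]
      nlinarith [mdaux_psd_diag_le_trace hX i, mdaux_psd_diag_le_trace hX j,
        mdaux_psd_diag_nonneg hX i, mdaux_psd_diag_nonneg hX j,
        mdaux_psd_trace_nonneg hX, e1]
    · have e2 : (0:ℝ) ≤ X i i + X j j - 2 * X i j := by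
        have := h2
        simp only [star_trivial, Matrix.mulVec_sub, Matrix.mulVec_single,
          dotProduct_sub, sub_dotProduct, single_dotProduct] at this
        simp only [MulOpposite.op_one, one_smul, one_mul, Matrix.col_apply] at this
        nlinarith [this, hsym]
      nlinarith [mdaux_psd_diag_le_trace hX i, mdaux_psd_diag_le_trace hX j,
        mdaux_psd_diag_nonneg hX i, mdaux_psd_diag_nonneg hX j,
        mdaux_psd_trace_nonneg hX, e2]

private lemma mdaux_posdef_sub_smul_psd (hn : 0 < n) {Wm S : Matrix (Fin n) (Fin n) ℝ}
    (hW : Wm.PosDef) (hS : S.PosSemidef) :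
    ∃ ε : ℝ, 0 < ε ∧ (Wm - ε • S).PosSemidef := by
  obtain ⟨ε₀, hε₀, h₀⟩ := mdaux_posdef_sub_smul_one hn hW
  have htr : (0:ℝ) ≤ S.trace := mdaux_psd_trace_nonneg hS
  have hpos : (0:ℝ) < S.trace + 1 := by linarith
  refine ⟨ε₀ / (S.trace + 1), div_pos hε₀ hpos, ?_⟩
  have key : Wm - (ε₀ / (S.trace + 1)) • S =
      (Wm - ε₀ • (1 : Matrix (Fin n) (Fin n) ℝ)) +
      (ε₀ / (S.trace + 1)) • ((S.trace • (1 : Matrix (Fin n) (Fin n) ℝ) - S) +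
        (1 : Matrix (Fin n) (Fin n) ℝ)) := by
    have h2 : (ε₀ / (S.trace + 1)) * S.trace + (ε₀ / (S.trace + 1)) = ε₀ := by
      field_simp
    rw [smul_add, smul_sub, smul_smul]
    rw [show (ε₀ / (S.trace + 1)) * S.trace = ε₀ - ε₀ / (S.trace + 1) by linarith [h2]]
    module
  rw [key]
  exact h₀.add (mdaux_psd_smul ((mdaux_psd_le_trace_one hS).add Matrix.PosSemidef.one)
    (by positivity))

private lemma mdaux_sub_smul_psd_mono {N : Type*} [Fintype N] {Wm S : Matrix N N ℝ} {ε ε' : ℝ}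
    (hS : S.PosSemidef) (h : (Wm - ε • S).PosSemidef) (h1 : 0 ≤ ε') (h2 : ε' ≤ ε) :
    (Wm - ε' • S).PosSemidef := by
  have key : Wm - ε' • S = (Wm - ε • S) + (ε - ε') • S := by module
  rw [key]
  exact h.add (mdaux_psd_smul hS (by linarith))

private lemma mdaux_fromBlocks_diag_psd {X Y : Matrix (Fin n) (Fin n) ℝ}
    (hX : X.PosSemidef) (hY : Y.PosSemidef) :
    (Matrix.fromBlocks X 0 0 Y).PosSemidef := by
  refine Matrix.PosSemidef.of_dotProduct_mulVec_nonneg ?_ ?_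
  · unfold Matrix.IsHermitian
    rw [show (Matrix.fromBlocks X 0 0 Y)ᴴ = Matrix.fromBlocks Xᴴ 0 0 Yᴴ by
      rw [Matrix.fromBlocks_conjTranspose]; simp]
    rw [hX.1, hY.1]
  · intro x
    rw [Matrix.fromBlocks_mulVec]
    simp only [Matrix.zero_mulVec, add_zero, zero_add]
    have hst : star x = x := by simp
    rw [hst, show x = Sum.elim (x ∘ Sum.inl) (x ∘ Sum.inr) by ext i; cases i <;> rfl]
    rw [sumElim_dotProduct_sumElim]
    have hx1 := hX.dotProduct_mulVec_nonneg (x ∘ Sum.inl)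
    have hx2 := hY.dotProduct_mulVec_nonneg (x ∘ Sum.inr)
    simp only [star_trivial] at hx1 hx2
    simp only [Sum.elim_comp_inl, Sum.elim_comp_inr]
    exact add_nonneg hx1 hx2

private lemma mdaux_feas_block_psd (ε : ℝ) (hε : 0 ≤ ε) (Am Wm : Matrix (Fin n) (Fin n) ℝ)
    (hW : (Wm - ε • (Am * Amᵀ)).PosSemidef) :
    (Matrix.fromBlocks ((ε/2) • (1 : Matrix (Fin n) (Fin n) ℝ)) (ε • Amᵀ) (ε • Am)
      (Wm + ε • (Am * Amᵀ))).PosSemidef := by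
  set L : Matrix (Fin n ⊕ Fin n) (Fin n ⊕ Fin n) ℝ :=
    Matrix.fromBlocks 1 0 ((2:ℝ) • Am) 0 with hL
  have hLLT : L * Lᵀ = Matrix.fromBlocks 1 ((2:ℝ) • Amᵀ) ((2:ℝ) • Am) ((4:ℝ) • (Am * Amᵀ)) := by
    rw [hL, Matrix.fromBlocks_transpose, Matrix.fromBlocks_multiply]
    have h4 : ((2:ℝ) • Am) * ((2:ℝ) • Am)ᵀ = (4:ℝ) • (Am * Amᵀ) := by
      rw [Matrix.transpose_smul, Matrix.smul_mul, Matrix.mul_smul, smul_smul]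
      norm_num
    rw [h4]
    congr 1 <;> simp [Matrix.smul_mul, Matrix.mul_smul]
  have key : Matrix.fromBlocks ((ε/2) • (1 : Matrix (Fin n) (Fin n) ℝ)) (ε • Amᵀ) (ε • Am)
      (Wm + ε • (Am * Amᵀ)) =
      (ε/2) • (L * Lᵀ) + Matrix.fromBlocks 0 0 0 (Wm - ε • (Am * Amᵀ)) := by
    have b2 : ε • Amᵀ = (ε/2) • ((2:ℝ) • Amᵀ) + 0 := by
      rw [add_zero, smul_smul]; norm_num
    have b3 : ε • Am = (ε/2) • ((2:ℝ) • Am) + 0 := by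
      rw [add_zero, smul_smul]; norm_num
    have b4 : Wm + ε • (Am * Amᵀ) = (ε/2) • ((4:ℝ) • (Am * Amᵀ)) + (Wm - ε • (Am * Amᵀ)) := by
      rw [smul_smul]
      have h5 : ε / 2 * 4 = ε + ε := by ring
      rw [h5]; module
    have b1 : (ε/2) • (1 : Matrix (Fin n) (Fin n) ℝ) =
        (ε/2) • (1 : Matrix (Fin n) (Fin n) ℝ) + 0 := by rw [add_zero]
    rw [hLLT, Matrix.fromBlocks_smul, Matrix.fromBlocks_add]
    conv_lhs => rw [b1, b2, b3, b4]
  have hps : (L * Lᵀ).PosSemidef := by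
    simpa [conjTranspose_eq_transpose_of_trivial] using
      Matrix.posSemidef_self_mul_conjTranspose L
  rw [key]
  exact (mdaux_psd_smul hps (by linarith)).add
    (mdaux_fromBlocks_diag_psd Matrix.PosSemidef.zero hW)

private lemma mdaux_isClosed_psd {N : Type*} [Fintype N] :
    IsClosed {X : Matrix N N ℝ | X.PosSemidef} := by
  have h : {X : Matrix N N ℝ | X.PosSemidef} =
      {X : Matrix N N ℝ | Xᴴ = X} ∩ ⋂ v : N → ℝ, {X | 0 ≤ star v ⬝ᵥ X *ᵥ v} := by
    ext X
    simp only [Set.mem_setOf_eq, Set.mem_inter_iff, Set.mem_iInter]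
    exact ⟨fun h => ⟨h.1, h.dotProduct_mulVec_nonneg⟩,
      fun h => Matrix.PosSemidef.of_dotProduct_mulVec_nonneg h.1 h.2⟩
  rw [h]
  refine IsClosed.inter ?_ (isClosed_iInter fun v => ?_)
  · exact isClosed_eq (continuous_id.matrix_conjTranspose) continuous_id
  · exact isClosed_le continuous_const
      ((continuous_const.dotProduct (continuous_id.matrix_mulVec continuous_const)))

private def mdaux_matrixHomeo (k l : ℕ) : (Fin k → Fin l → ℝ) ≃ₜ Matrix (Fin k) (Fin l) ℝ where
  toEquiv := Matrix.of
  continuous_toFun := continuous_matrix fun i j => (continuous_apply j).comp (continuous_apply i)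
  continuous_invFun := continuous_pi fun i => continuous_pi fun j =>
    continuous_id.matrix_elem i j

private lemma mdaux_isCompact_box {k : ℕ} (r : ℝ) :
    IsCompact {X : Matrix (Fin k) (Fin k) ℝ | ∀ i j, X i j ∈ Set.Icc (-r) r} := by
  have h1 : IsCompact (Set.univ.pi fun _ : Fin k =>
      (Set.univ.pi fun _ : Fin k => Set.Icc (-r) r)) :=
    isCompact_univ_pi fun _ => isCompact_univ_pi fun _ => isCompact_Icc
  have h2 := h1.image (mdaux_matrixHomeo k k).continuous
  convert h2 using 1
  ext X
  simp only [Set.mem_setOf_eq, Set.mem_image, Set.mem_pi, Set.mem_univ, forall_true_left]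
  constructor
  · intro h
    exact ⟨fun i j => X i j, fun i j => h i j, rfl⟩
  · rintro ⟨f, hf, rfl⟩
    intro i j
    exact hf i j

/-- the recursive upper bound matrices -/
private def mdauxB (n : ℕ) (A W : ℕ → Matrix (Fin n) (Fin n) ℝ)
    (P₀ : Matrix (Fin n) (Fin n) ℝ) : ℕ → Matrix (Fin n) (Fin n) ℝ
  | 0 => P₀
  | (t+1) => A t * mdauxB n A W P₀ t * (A t)ᵀ + W t

private lemma mdaux_logsum {T : ℕ} (Md : ℝ) (hM : 1 ≤ Md) (d : ℕ → ℝ)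
    (hpos : ∀ t ∈ Finset.Icc 1 T, 0 < d t) (hle : ∀ t ∈ Finset.Icc 1 T, d t ≤ Md)
    {t₀ : ℕ} (ht₀ : t₀ ∈ Finset.Icc 1 T) :
    ∑ t ∈ Finset.Icc 1 T, Real.log (d t) ≤
      Real.log (d t₀) + (T - 1 : ℕ) * Real.log Md := by
  rw [← Finset.add_sum_erase _ _ ht₀]
  have hcard : ((Finset.Icc 1 T).erase t₀).card = T - 1 := by
    rw [Finset.card_erase_of_mem ht₀, Nat.card_Icc]
    omega
  have hbound : ∀ t ∈ (Finset.Icc 1 T).erase t₀, Real.log (d t) ≤ Real.log Md := by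
    intro t ht
    have ht' := Finset.mem_of_mem_erase ht
    exact Real.log_le_log (hpos t ht') (hle t ht')
  have := Finset.sum_le_card_nsmul _ _ _ hbound
  rw [hcard] at this
  have h2 : ((T - 1 : ℕ) : ℝ) * Real.log Md = (T - 1 : ℕ) • Real.log Md := by
    rw [nsmul_eq_mul]
  linarith [this, h2.ge]

end mdauxlemmas

open Matrix

/-- The max-det feasible set `F`. -/
def maxdetFeasible (n T : ℕ) (A W Θ : ℕ → Matrix (Fin n) (Fin n) ℝ)
    (P₀ : Matrix (Fin n) (Fin n) ℝ) (D : ℕ → ℝ) :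
    Set ((ℕ → Matrix (Fin n) (Fin n) ℝ) × (ℕ → Matrix (Fin n) (Fin n) ℝ)) :=
  {PQ | PQ.1 0 = P₀ ∧
    (∀ t, 1 ≤ t → t ≤ T → (PQ.2 t).PosDef) ∧
    (∀ t, t < T → (A t * PQ.1 t * (A t)ᵀ + W t - PQ.1 (t + 1)).PosSemidef) ∧
    (∀ t, 1 ≤ t → t < T →
      (fromBlocks (PQ.1 t - PQ.2 t) (PQ.1 t * (A t)ᵀ) (A t * PQ.1 t)
        (W t + A t * PQ.1 t * (A t)ᵀ)).PosSemidef) ∧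
    (∀ t, 1 ≤ t → t ≤ T → (Θ t * PQ.1 t).trace ≤ D t) ∧
    PQ.1 T = PQ.2 T}

/-- The constant `c = ½ log det (A 0 P₀ (A 0)ᵀ + W 0) + Σ_{t=1}^{T−1} ½ log det (W t)`. -/
noncomputable def maxdetConst (n T : ℕ) (A W : ℕ → Matrix (Fin n) (Fin n) ℝ)
    (P₀ : Matrix (Fin n) (Fin n) ℝ) : ℝ :=
  (1 / 2) * Real.log (A 0 * P₀ * (A 0)ᵀ + W 0).det +
    ∑ t ∈ Finset.Ico 1 T, (1 / 2) * Real.log (W t).det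

/-- The max-det objective `J(Π) = −Σ_{t=1}^{T} ½ log det (Π t) + c`. -/
noncomputable def maxdetObj (n T : ℕ) (A W : ℕ → Matrix (Fin n) (Fin n) ℝ)
    (P₀ : Matrix (Fin n) (Fin n) ℝ) (Q : ℕ → Matrix (Fin n) (Fin n) ℝ) : ℝ :=
  -∑ t ∈ Finset.Icc 1 T, (1 / 2) * Real.log (Q t).det + maxdetConst n T A W P₀

/-- The infimum of the max-det objective over the max-det feasible set
is finite and attained, i.e. the set of attained objective values has a least element. -/
theorem maxdet_inf_attained (n T : ℕ) (hn : 0 < n) (hT : 1 ≤ T)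
    (A W Θ : ℕ → Matrix (Fin n) (Fin n) ℝ) (P₀ : Matrix (Fin n) (Fin n) ℝ)
    (D : ℕ → ℝ)
    (hW : ∀ t, t < T → (W t).PosDef) (hP₀ : P₀.PosDef)
    (hΘ : ∀ t, 1 ≤ t → t ≤ T → (Θ t).PosSemidef)
    (hD : ∀ t, 1 ≤ t → t ≤ T → 0 < D t) :
    ∃ PQ ∈ maxdetFeasible n T A W Θ P₀ D,
      IsLeast ((fun PQ' => maxdetObj n T A W P₀ PQ'.2) ''
          maxdetFeasible n T A W Θ P₀ D)
        (maxdetObj n T A W P₀ PQ.2) := by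
  classical
  set F := maxdetFeasible n T A W Θ P₀ D with hFdef
  set J : (ℕ → Matrix (Fin n) (Fin n) ℝ) × (ℕ → Matrix (Fin n) (Fin n) ℝ) → ℝ :=
    fun x => maxdetObj n T A W P₀ x.2 with hJdef
  set B := mdauxB n A W P₀ with hBdef
  have hBsucc : ∀ t, B (t+1) = A t * B t * (A t)ᵀ + W t := fun t => rfl
  have hB0 : B 0 = P₀ := rfl
  -- B is positive definite up to time T
  have hBpd : ∀ t, t ≤ T → (B t).PosDef := by
    intro t
    induction t with
    | zero => exact fun _ => hP₀
    | succ t ih =>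
      intro h
      rw [hBsucc t]
      exact Matrix.PosDef.posSemidef_add
        (mdaux_psd_mul_mul_transpose (ih (by omega)).posSemidef (A t)) (hW t (by omega))
  -- domination of the P-part of feasible points
  have hdom : ∀ x ∈ F, ∀ t, t ≤ T → (B t - x.1 t).PosSemidef := by
    rintro x hx t
    obtain ⟨hC1, hC2, hC3, hC4, hC5, hC6⟩ := hx
    induction t with
    | zero =>
      intro _
      rw [hB0, hC1, sub_self]
      exact Matrix.PosSemidef.zero
    | succ t ih =>
      intro h
      have h1 := hC3 t (by omega)
      have h2 : (A t * (B t - x.1 t) * (A t)ᵀ).PosSemidef :=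
        mdaux_psd_mul_mul_transpose (ih (by omega)) (A t)
      have key : B (t+1) - x.1 (t+1) =
          A t * (B t - x.1 t) * (A t)ᵀ + (A t * x.1 t * (A t)ᵀ + W t - x.1 (t+1)) := by
        rw [hBsucc t, Matrix.mul_sub, Matrix.sub_mul]
        abel
      rw [key]
      exact h2.add h1
  -- pointwise PSD facts
  have hPSD : ∀ x ∈ F, ∀ t, 1 ≤ t → t ≤ T →
      (x.1 t - x.2 t).PosSemidef ∧ (x.1 t).PosSemidef ∧ (x.2 t).PosSemidef := by
    rintro x hx t h1 h2
    obtain ⟨hC1, hC2, hC3, hC4, hC5, hC6⟩ := hx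
    have hQ := (hC2 t h1 h2).posSemidef
    have hPmQ : (x.1 t - x.2 t).PosSemidef := by
      rcases eq_or_lt_of_le h2 with rfl | hlt
      · rw [hC6, sub_self]
        exact Matrix.PosSemidef.zero
      · have hblk := (hC4 t h1 hlt).submatrix (Sum.inl : Fin n → Fin n ⊕ Fin n)
        have htop : (fromBlocks (x.1 t - x.2 t) (x.1 t * (A t)ᵀ) (A t * x.1 t)
            (W t + A t * x.1 t * (A t)ᵀ)).submatrix
            (Sum.inl : Fin n → Fin n ⊕ Fin n) (Sum.inl : Fin n → Fin n ⊕ Fin n)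
            = x.1 t - x.2 t := by
          ext i j
          rfl
        rwa [htop] at hblk
    have hP : (x.1 t).PosSemidef := by
      have e : x.1 t = (x.1 t - x.2 t) + x.2 t := by abel
      rw [e]
      exact hPmQ.add hQ
    exact ⟨hPmQ, hP, hQ⟩
  -- entrywise bound
  set R := |(B 0).trace| + ∑ t ∈ Finset.Icc 1 T, |(B t).trace| with hRdef
  have hRnn : (0:ℝ) ≤ R := by positivity
  have htr_le : ∀ t, 1 ≤ t → t ≤ T → |(B t).trace| ≤ R := by
    intro t h1 h2
    have h3 : |(B t).trace| ≤ ∑ s ∈ Finset.Icc 1 T, |(B s).trace| :=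
      Finset.single_le_sum (f := fun s => |(B s).trace|) (fun s _ => abs_nonneg _)
        (Finset.mem_Icc.mpr ⟨h1, h2⟩)
    have h4 : (0:ℝ) ≤ |(B 0).trace| := abs_nonneg _
    rw [hRdef]
    linarith
  have hEnt : ∀ x ∈ F, ∀ t, 1 ≤ t → t ≤ T →
      (∀ i j, |x.1 t i j| ≤ R) ∧ (∀ i j, |x.2 t i j| ≤ R) := by
    intro x hx t h1 h2
    obtain ⟨hPQ, hP, hQ⟩ := hPSD x hx t h1 h2
    have hdom' := hdom x hx t h2
    have htrP : (x.1 t).trace ≤ (B t).trace := by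
      have h3 := mdaux_psd_trace_nonneg hdom'
      rw [Matrix.trace_sub] at h3
      linarith
    have htrQ : (x.2 t).trace ≤ (B t).trace := by
      have h4 : (B t - x.2 t).PosSemidef := by
        have e : B t - x.2 t = (B t - x.1 t) + (x.1 t - x.2 t) := by abel
        rw [e]
        exact hdom'.add hPQ
      have h5 := mdaux_psd_trace_nonneg h4
      rw [Matrix.trace_sub] at h5
      linarith
    have hBtr : (B t).trace ≤ R := le_trans (le_abs_self _) (htr_le t h1 h2)
    exact ⟨fun i j => le_trans (mdaux_psd_entry_le_trace hP i j) (le_trans htrP hBtr),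
      fun i j => le_trans (mdaux_psd_entry_le_trace hQ i j) (le_trans htrQ hBtr)⟩
  -- determinant upper bound
  set Md := max ((n.factorial : ℝ) * R ^ n) 1 with hMdef
  have hMd1 : (1:ℝ) ≤ Md := le_max_right _ _
  have hdetle : ∀ x ∈ F, ∀ t, 1 ≤ t → t ≤ T → (x.2 t).det ≤ Md := by
    intro x hx t h1 h2
    have hent := (hEnt x hx t h1 h2).2
    have h3 := Matrix.det_le (A := x.2 t) (abv := (AbsoluteValue.abs : AbsoluteValue ℝ ℝ))
      (x := R) (fun i j => by simpa using hent i j)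
    simp only [AbsoluteValue.abs_apply, Fintype.card_fin, nsmul_eq_mul] at h3
    exact le_trans (le_trans (le_abs_self _) h3) (le_max_left _ _)
  -- ===================== feasible point =====================
  have hfeas : ∃ x₀, x₀ ∈ F ∧ (∀ t, T < t → x₀.1 t = 0) ∧ x₀.2 0 = 0 ∧
      (∀ t, T < t → x₀.2 t = 0) := by
    have hWS : ∀ t, ∃ εt : ℝ, 0 < εt ∧ (t < T →
        ((W t - εt • (1 : Matrix (Fin n) (Fin n) ℝ)).PosSemidef ∧
          (W t - εt • (A t * (A t)ᵀ)).PosSemidef)) := by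
      intro t
      by_cases ht : t < T
      · obtain ⟨ε₁, h1, h1'⟩ := mdaux_posdef_sub_smul_one hn (hW t ht)
        have hAAt : ((A t) * (A t)ᵀ).PosSemidef := by
          simpa [conjTranspose_eq_transpose_of_trivial] using
            Matrix.posSemidef_self_mul_conjTranspose (A t)
        obtain ⟨ε₂, h2, h2'⟩ := mdaux_posdef_sub_smul_psd hn (hW t ht) hAAt
        refine ⟨min ε₁ ε₂, lt_min h1 h2, fun _ => ⟨?_, ?_⟩⟩
        · exact mdaux_sub_smul_psd_mono Matrix.PosSemidef.one h1'
            (le_of_lt (lt_min h1 h2)) (min_le_left _ _)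
        · exact mdaux_sub_smul_psd_mono hAAt h2'
            (le_of_lt (lt_min h1 h2)) (min_le_right _ _)
      · exact ⟨1, one_pos, fun h => absurd h ht⟩
    choose f hf using hWS
    have hTrS : ∀ t, ∃ εt : ℝ, 0 < εt ∧ (1 ≤ t → t ≤ T → εt * (Θ t).trace ≤ D t) := by
      intro t
      by_cases ht : 1 ≤ t ∧ t ≤ T
      · have htr : (0:ℝ) ≤ (Θ t).trace := mdaux_psd_trace_nonneg (hΘ t ht.1 ht.2)
        have hpos : (0:ℝ) < (Θ t).trace + 1 := by linarith
        refine ⟨D t / ((Θ t).trace + 1), div_pos (hD t ht.1 ht.2) hpos, fun _ _ => ?_⟩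
        have heq : D t / ((Θ t).trace + 1) * ((Θ t).trace + 1) = D t :=
          div_mul_cancel₀ _ (ne_of_gt hpos)
        nlinarith [div_pos (hD t ht.1 ht.2) hpos]
      · exact ⟨1, one_pos, fun h1 h2 => absurd ⟨h1, h2⟩ ht⟩
    choose g hg using hTrS
    have hrne : (Finset.range T).Nonempty := ⟨0, Finset.mem_range.mpr (by omega)⟩
    have hine : (Finset.Icc 1 T).Nonempty := ⟨1, Finset.mem_Icc.mpr ⟨le_refl 1, hT⟩⟩
    set ε := min ((Finset.range T).inf' hrne f) ((Finset.Icc 1 T).inf' hine g) with hεdef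
    have hε0 : 0 < ε := by
      rw [hεdef, lt_min_iff, Finset.lt_inf'_iff, Finset.lt_inf'_iff]
      exact ⟨fun t _ => (hf t).1, fun t _ => (hg t).1⟩
    have hεf : ∀ t, t < T → ε ≤ f t := fun t ht =>
      le_trans (min_le_left _ _) (Finset.inf'_le _ (Finset.mem_range.mpr ht))
    have hεg : ∀ t, 1 ≤ t → t ≤ T → ε ≤ g t := fun t h1 h2 =>
      le_trans (min_le_right _ _) (Finset.inf'_le _ (Finset.mem_Icc.mpr ⟨h1, h2⟩))
    refine ⟨(fun t => if t = 0 then P₀ else if t ≤ T then ε • 1 else 0,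
      fun t => if 1 ≤ t ∧ t < T then (ε/2) • 1 else if t = T then ε • 1 else 0),
      ⟨?_, ?_, ?_, ?_, ?_, ?_⟩, ?_, ?_, ?_⟩
    · -- P 0 = P₀
      simp
    · -- Q t PosDef
      intro t h1 h2
      simp only
      by_cases hlt : t < T
      · rw [if_pos ⟨h1, hlt⟩]
        exact mdaux_smul_one_posdef (by linarith)
      · have : t = T := by omega
        rw [if_neg (by omega), if_pos this]
        exact mdaux_smul_one_posdef hε0
    · -- recursion constraint
      intro t ht
      simp only
      rcases Nat.eq_zero_or_pos t with rfl | hpos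
      · rw [if_pos rfl, if_neg (by omega), if_pos (by omega)]
        have key : A 0 * P₀ * (A 0)ᵀ + W 0 - ε • 1 =
            (W 0 - ε • (1 : Matrix (Fin n) (Fin n) ℝ)) + A 0 * P₀ * (A 0)ᵀ := by abel
        rw [key]
        exact (mdaux_sub_smul_psd_mono Matrix.PosSemidef.one ((hf 0).2 ht).1
          (le_of_lt hε0) (hεf 0 ht)).add (mdaux_psd_mul_mul_transpose hP₀.posSemidef (A 0))
      · rw [if_neg (by omega), if_pos (by omega), if_neg (by omega), if_pos (by omega)]
        have key : A t * (ε • 1) * (A t)ᵀ + W t - ε • 1 =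
            (W t - ε • (1 : Matrix (Fin n) (Fin n) ℝ)) + ε • (A t * (A t)ᵀ) := by
          rw [Matrix.mul_smul, Matrix.smul_mul, Matrix.mul_one]
          abel
        rw [key]
        exact (mdaux_sub_smul_psd_mono Matrix.PosSemidef.one ((hf t).2 ht).1
          (le_of_lt hε0) (hεf t ht)).add
          (mdaux_psd_smul (by
            simpa [conjTranspose_eq_transpose_of_trivial] using
              Matrix.posSemidef_self_mul_conjTranspose (A t)) (le_of_lt hε0))
    · -- block constraint
      intro t h1 hlt
      simp only
      rw [if_neg (by omega), if_pos (by omega), if_pos ⟨h1, hlt⟩]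
      have e1 : ε • (1 : Matrix (Fin n) (Fin n) ℝ) - (ε/2) • 1 = (ε/2) • 1 := by
        rw [← sub_smul, show ε - ε/2 = ε/2 by ring]
      have e2 : (ε • (1 : Matrix (Fin n) (Fin n) ℝ)) * (A t)ᵀ = ε • (A t)ᵀ := by
        rw [Matrix.smul_mul, Matrix.one_mul]
      have e3 : A t * (ε • (1 : Matrix (Fin n) (Fin n) ℝ)) = ε • A t := by
        rw [Matrix.mul_smul, Matrix.mul_one]
      have e4 : W t + A t * (ε • (1 : Matrix (Fin n) (Fin n) ℝ)) * (A t)ᵀ =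
          W t + ε • (A t * (A t)ᵀ) := by
        rw [Matrix.mul_smul, Matrix.smul_mul, Matrix.mul_one]
      have e4' : (ε • A t) * (A t)ᵀ = ε • (A t * (A t)ᵀ) := by
        rw [Matrix.smul_mul]
      rw [e1, e2, e3, e4']
      exact mdaux_feas_block_psd ε (le_of_lt hε0) (A t) (W t)
        (mdaux_sub_smul_psd_mono (by
          simpa [conjTranspose_eq_transpose_of_trivial] using
            Matrix.posSemidef_self_mul_conjTranspose (A t)) ((hf t).2 hlt).2
          (le_of_lt hε0) (hεf t hlt))
    · -- trace constraint
      intro t h1 h2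
      simp only
      rw [if_neg (by omega), if_pos h2]
      have e5 : (Θ t * (ε • (1 : Matrix (Fin n) (Fin n) ℝ))).trace = ε * (Θ t).trace := by
        rw [Matrix.mul_smul, Matrix.mul_one, Matrix.trace_smul, smul_eq_mul]
      rw [e5]
      have htr : (0:ℝ) ≤ (Θ t).trace := mdaux_psd_trace_nonneg (hΘ t h1 h2)
      calc ε * (Θ t).trace ≤ g t * (Θ t).trace :=
            mul_le_mul_of_nonneg_right (hεg t h1 h2) htr
        _ ≤ D t := (hg t).2 h1 h2
    · -- terminal equality
      simp only
      rw [if_neg (show ¬T = 0 by omega), if_pos (le_refl T),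
        if_neg (show ¬(1 ≤ T ∧ T < T) by omega)]
      simp
    · intro t ht
      simp only
      rw [if_neg (by omega), if_neg (by omega)]
    · simp only
      rw [if_neg (by omega), if_neg (by omega)]
    · intro t ht
      simp only
      rw [if_neg (by omega), if_neg (by omega)]
  obtain ⟨x₀, hx₀F, hx₀Z1, hx₀Z2, hx₀Z3⟩ := hfeas
  -- determinants of the feasible point
  have hx₀Qd : ∀ t ∈ Finset.Icc 1 T, 0 < (x₀.2 t).det := by
    intro t ht
    obtain ⟨h1, h2⟩ := Finset.mem_Icc.mp ht
    exact (hx₀F.2.1 t h1 h2).det_pos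
  set S0 := ∑ t ∈ Finset.Icc 1 T, Real.log ((x₀.2 t).det) with hS0def
  set δ := Real.exp (S0 - (T - 1 : ℕ) * Real.log Md) with hδdef
  have hδpos : 0 < δ := Real.exp_pos _
  have hlogδ : Real.log δ = S0 - (T - 1 : ℕ) * Real.log Md := by
    rw [hδdef, Real.log_exp]
  have hx₀δ : ∀ t ∈ Finset.Icc 1 T, δ ≤ (x₀.2 t).det := by
    intro t ht
    rw [hδdef, ← Real.le_log_iff_exp_le (hx₀Qd t ht)]
    have hls := mdaux_logsum Md hMd1 (fun s => (x₀.2 s).det) hx₀Qd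
      (fun s hs => hdetle x₀ hx₀F s (Finset.mem_Icc.mp hs).1 (Finset.mem_Icc.mp hs).2) ht
    rw [← hS0def] at hls
    linarith
  -- the compact search region
  set BoxM := {X : Matrix (Fin n) (Fin n) ℝ | ∀ i j, X i j ∈ Set.Icc (-R) R} with hBoxMdef
  set Box := {f : ℕ → Matrix (Fin n) (Fin n) ℝ | ∀ t, f t ∈ BoxM} ×ˢ
    {f : ℕ → Matrix (Fin n) (Fin n) ℝ | ∀ t, f t ∈ BoxM} with hBoxdef
  have hBoxCmp : IsCompact Box :=
    (isCompact_pi_infinite fun _ => mdaux_isCompact_box R).prod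
      (isCompact_pi_infinite fun _ => mdaux_isCompact_box R)
  set Kc := {x : (ℕ → Matrix (Fin n) (Fin n) ℝ) × (ℕ → Matrix (Fin n) (Fin n) ℝ) |
    x.1 0 = P₀ ∧
    (∀ t, 1 ≤ t → t ≤ T → (x.2 t).PosSemidef ∧ δ ≤ (x.2 t).det) ∧
    (∀ t, t < T → (A t * x.1 t * (A t)ᵀ + W t - x.1 (t + 1)).PosSemidef) ∧
    (∀ t, 1 ≤ t → t < T →
      (fromBlocks (x.1 t - x.2 t) (x.1 t * (A t)ᵀ) (A t * x.1 t)
        (W t + A t * x.1 t * (A t)ᵀ)).PosSemidef) ∧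
    (∀ t, 1 ≤ t → t ≤ T → (Θ t * x.1 t).trace ≤ D t) ∧
    x.1 T = x.2 T} with hKcdef
  have hev1 : ∀ t, Continuous
      fun x : (ℕ → Matrix (Fin n) (Fin n) ℝ) × (ℕ → Matrix (Fin n) (Fin n) ℝ) => x.1 t :=
    fun t => (continuous_apply t).comp continuous_fst
  have hev2 : ∀ t, Continuous
      fun x : (ℕ → Matrix (Fin n) (Fin n) ℝ) × (ℕ → Matrix (Fin n) (Fin n) ℝ) => x.2 t :=
    fun t => (continuous_apply t).comp continuous_snd
  have hKc_closed : IsClosed Kc := by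
    have he : Kc = ({x | x.1 0 = P₀} ∩
        (⋂ t, ⋂ (_ : 1 ≤ t), ⋂ (_ : t ≤ T),
          ({x | (x.2 t).PosSemidef} ∩ {x | δ ≤ (x.2 t).det})) ∩
        (⋂ t, ⋂ (_ : t < T),
          {x | (A t * x.1 t * (A t)ᵀ + W t - x.1 (t + 1)).PosSemidef}) ∩
        (⋂ t, ⋂ (_ : 1 ≤ t), ⋂ (_ : t < T),
          {x | (fromBlocks (x.1 t - x.2 t) (x.1 t * (A t)ᵀ) (A t * x.1 t)
            (W t + A t * x.1 t * (A t)ᵀ)).PosSemidef}) ∩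
        (⋂ t, ⋂ (_ : 1 ≤ t), ⋂ (_ : t ≤ T), {x | (Θ t * x.1 t).trace ≤ D t}) ∩
        {x | x.1 T = x.2 T}) := by
      rw [hKcdef]
      ext x
      simp only [Set.mem_inter_iff, Set.mem_iInter, Set.mem_setOf_eq]
      constructor
      · rintro ⟨c1, c2, c3, c4, c5, c6⟩
        exact ⟨⟨⟨⟨⟨c1, fun t h1 h2 => c2 t h1 h2⟩, fun t h => c3 t h⟩,
          fun t h1 h2 => c4 t h1 h2⟩, fun t h1 h2 => c5 t h1 h2⟩, c6⟩
      · rintro ⟨⟨⟨⟨⟨c1, c2⟩, c3⟩, c4⟩, c5⟩, c6⟩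
        exact ⟨c1, fun t h1 h2 => c2 t h1 h2, fun t h => c3 t h,
          fun t h1 h2 => c4 t h1 h2, fun t h1 h2 => c5 t h1 h2, c6⟩
    rw [he]
    refine (((((isClosed_eq (hev1 0) continuous_const).inter ?_).inter ?_).inter ?_).inter
      ?_).inter (isClosed_eq (hev1 T) (hev2 T))
    · refine isClosed_iInter fun t => isClosed_iInter fun _ => isClosed_iInter fun _ => ?_
      exact (mdaux_isClosed_psd.preimage (hev2 t)).inter
        (isClosed_le continuous_const ((hev2 t).matrix_det))
    · refine isClosed_iInter fun t => isClosed_iInter fun _ => ?_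
      exact mdaux_isClosed_psd.preimage
        ((((continuous_const.matrix_mul (hev1 t)).matrix_mul continuous_const).add
          continuous_const).sub (hev1 (t + 1)))
    · refine isClosed_iInter fun t => isClosed_iInter fun _ => isClosed_iInter fun _ => ?_
      exact mdaux_isClosed_psd.preimage
        (Continuous.matrix_fromBlocks ((hev1 t).sub (hev2 t))
          ((hev1 t).matrix_mul continuous_const)
          (continuous_const.matrix_mul (hev1 t))
          (continuous_const.add
            ((continuous_const.matrix_mul (hev1 t)).matrix_mul continuous_const)))
    · refine isClosed_iInter fun t => isClosed_iInter fun _ => isClosed_iInter fun _ => ?_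
      exact isClosed_le ((continuous_const.matrix_mul (hev1 t)).matrix_trace) continuous_const
  set K := Kc ∩ Box with hKdef
  have hKcmp : IsCompact K := hBoxCmp.inter_left hKc_closed
  have hKF : K ⊆ F := by
    rintro x ⟨⟨c1, c2, c3, c4, c5, c6⟩, _⟩
    exact ⟨c1, fun t h1 h2 => mdaux_psd_posdef (c2 t h1 h2).1
      (ne_of_gt (lt_of_lt_of_le hδpos (c2 t h1 h2).2)), c3, c4, c5, c6⟩
  -- normalized feasible points lie in the box
  have hFbox : ∀ x ∈ F, (∀ t, T < t → x.1 t = 0) → x.2 0 = 0 → (∀ t, T < t → x.2 t = 0) →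
      x ∈ Box := by
    intro x hx hz1 hz2 hz3
    have hmem : ∀ X : Matrix (Fin n) (Fin n) ℝ, (∀ i j, |X i j| ≤ R) → X ∈ BoxM := by
      intro X h
      intro i j
      rw [Set.mem_Icc, ← abs_le]
      exact h i j
    constructor
    · intro t
      rcases Nat.eq_zero_or_pos t with rfl | hpos
      · refine hmem _ fun i j => ?_
        rw [hx.1]
        calc |P₀ i j| ≤ P₀.trace := mdaux_psd_entry_le_trace hP₀.posSemidef i j
          _ ≤ |(B 0).trace| := by rw [hB0]; exact le_abs_self _
          _ ≤ R := by
            rw [hRdef]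
            have : (0:ℝ) ≤ ∑ t ∈ Finset.Icc 1 T, |(B t).trace| :=
              Finset.sum_nonneg fun s _ => abs_nonneg _
            linarith
      · by_cases hle : t ≤ T
        · exact hmem _ ((hEnt x hx t hpos hle).1)
        · refine hmem _ fun i j => ?_
          rw [hz1 t (by omega)]
          simpa using hRnn
    · intro t
      rcases Nat.eq_zero_or_pos t with rfl | hpos
      · refine hmem _ fun i j => ?_
        rw [hz2]
        simpa using hRnn
      · by_cases hle : t ≤ T
        · exact hmem _ ((hEnt x hx t hpos hle).2)
        · refine hmem _ fun i j => ?_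
          rw [hz3 t (by omega)]
          simpa using hRnn
  have hx₀K : x₀ ∈ K := by
    refine ⟨⟨hx₀F.1, fun t h1 h2 => ⟨(hx₀F.2.1 t h1 h2).posSemidef,
      hx₀δ t (Finset.mem_Icc.mpr ⟨h1, h2⟩)⟩, hx₀F.2.2.1, hx₀F.2.2.2.1,
      hx₀F.2.2.2.2.1, hx₀F.2.2.2.2.2⟩, hFbox x₀ hx₀F hx₀Z1 hx₀Z2 hx₀Z3⟩
  -- continuity of the objective on K
  have hJcont : ContinuousOn J K := by
    have hJeq : J = fun x : (ℕ → Matrix (Fin n) (Fin n) ℝ) × (ℕ → Matrix (Fin n) (Fin n) ℝ) =>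
        -∑ t ∈ Finset.Icc 1 T, (1 / 2 : ℝ) * Real.log ((x.2 t).det) + maxdetConst n T A W P₀ := by
      funext x
      rw [hJdef]
      rfl
    rw [hJeq]
    refine ContinuousOn.add (ContinuousOn.neg ?_) continuousOn_const
    refine continuousOn_finset_sum _ fun t ht => ContinuousOn.mul continuousOn_const ?_
    intro x hx
    obtain ⟨h1, h2⟩ := Finset.mem_Icc.mp ht
    have hne : (x.2 t).det ≠ 0 :=
      ne_of_gt (lt_of_lt_of_le hδpos ((hx.1.2.1 t h1 h2).2))
    exact (((hev2 t).matrix_det).continuousAt.log hne).continuousWithinAt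
  obtain ⟨z, hzK, hzmin⟩ := hKcmp.exists_isMinOn ⟨x₀, hx₀K⟩ hJcont
  have hzF : z ∈ F := hKF hzK
  refine ⟨z, hzF, ⟨⟨z, hzF, rfl⟩, ?_⟩⟩
  rintro v ⟨y, hyF, rfl⟩
  set y' := ((fun t => if t ≤ T then y.1 t else 0,
    fun t => if 1 ≤ t ∧ t ≤ T then y.2 t else 0) :
    (ℕ → Matrix (Fin n) (Fin n) ℝ) × (ℕ → Matrix (Fin n) (Fin n) ℝ)) with hy'def
  have hy'1 : ∀ t, t ≤ T → y'.1 t = y.1 t := by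
    intro t h
    simp only [hy'def]
    rw [if_pos h]
  have hy'2 : ∀ t, 1 ≤ t → t ≤ T → y'.2 t = y.2 t := by
    intro t h1 h2
    simp only [hy'def]
    rw [if_pos (⟨h1, h2⟩ : 1 ≤ t ∧ t ≤ T)]
  have hy'Z1 : ∀ t, T < t → y'.1 t = 0 := by
    intro t h
    simp only [hy'def]
    rw [if_neg (show ¬t ≤ T by omega)]
  have hy'Z2 : y'.2 0 = 0 := by
    simp only [hy'def]
    rw [if_neg (show ¬(1 ≤ 0 ∧ 0 ≤ T) by omega)]
  have hy'Z3 : ∀ t, T < t → y'.2 t = 0 := by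
    intro t h
    simp only [hy'def]
    rw [if_neg (show ¬(1 ≤ t ∧ t ≤ T) by omega)]
  obtain ⟨c1, c2, c3, c4, c5, c6⟩ := hyF
  have hy'F : y' ∈ F := by
    refine ⟨?_, ?_, ?_, ?_, ?_, ?_⟩
    · rw [hy'1 0 (by omega)]
      exact c1
    · intro t h1 h2
      rw [hy'2 t h1 h2]
      exact c2 t h1 h2
    · intro t ht
      rw [hy'1 t (by omega), hy'1 (t + 1) (by omega)]
      exact c3 t ht
    · intro t h1 h2
      rw [hy'1 t (by omega), hy'2 t h1 (by omega)]
      exact c4 t h1 h2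
    · intro t h1 h2
      rw [hy'1 t h2]
      exact c5 t h1 h2
    · rw [hy'1 T (le_refl T), hy'2 T hT (le_refl T)]
      exact c6
  have hy'J : J y' = J y := by
    have hsums : ∑ t ∈ Finset.Icc 1 T, (1/2 : ℝ) * Real.log ((y'.2 t).det) =
        ∑ t ∈ Finset.Icc 1 T, (1/2 : ℝ) * Real.log ((y.2 t).det) := by
      refine Finset.sum_congr rfl fun t ht => ?_
      obtain ⟨h1, h2⟩ := Finset.mem_Icc.mp ht
      rw [hy'2 t h1 h2]
    rw [hJdef]
    simp only
    unfold maxdetObj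
    rw [hsums]
  have hgoal : J z ≤ J y := by
    have hy'Qpos : ∀ t ∈ Finset.Icc 1 T, 0 < (y'.2 t).det := by
      intro t ht
      obtain ⟨h1, h2⟩ := Finset.mem_Icc.mp ht
      exact (hy'F.2.1 t h1 h2).det_pos
    by_cases hdet : ∀ t ∈ Finset.Icc 1 T, δ ≤ (y'.2 t).det
    · have hy'K : y' ∈ K := by
        refine ⟨⟨hy'F.1, fun t h1 h2 => ⟨(hy'F.2.1 t h1 h2).posSemidef,
          hdet t (Finset.mem_Icc.mpr ⟨h1, h2⟩)⟩, hy'F.2.2.1, hy'F.2.2.2.1,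
          hy'F.2.2.2.2.1, hy'F.2.2.2.2.2⟩, hFbox y' hy'F hy'Z1 hy'Z2 hy'Z3⟩
      calc J z ≤ J y' := isMinOn_iff.mp hzmin y' hy'K
        _ = J y := hy'J
    · push_neg at hdet
      obtain ⟨t₀, ht₀, hlt⟩ := hdet
      have hsum_lt : ∑ t ∈ Finset.Icc 1 T, Real.log ((y'.2 t).det) < S0 := by
        have h1 := mdaux_logsum Md hMd1 (fun s => (y'.2 s).det) hy'Qpos
          (fun s hs => hdetle y' hy'F s (Finset.mem_Icc.mp hs).1 (Finset.mem_Icc.mp hs).2) ht₀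
        have h2 : Real.log ((y'.2 t₀).det) < Real.log δ :=
          Real.log_lt_log (hy'Qpos t₀ ht₀) hlt
        rw [hlogδ] at h2
        linarith
      have hJx₀ : J x₀ < J y' := by
        rw [hJdef]
        simp only
        unfold maxdetObj
        have e1 : ∑ t ∈ Finset.Icc 1 T, (1/2 : ℝ) * Real.log ((x₀.2 t).det) =
            (1/2 : ℝ) * S0 := by
          rw [hS0def, Finset.mul_sum]
        have e2 : ∑ t ∈ Finset.Icc 1 T, (1/2 : ℝ) * Real.log ((y'.2 t).det) =
            (1/2 : ℝ) * ∑ t ∈ Finset.Icc 1 T, Real.log ((y'.2 t).det) := by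
          rw [Finset.mul_sum]
        rw [show (1:ℝ)/2 = (1/2 : ℝ) from rfl] at *
        have e1' : ∑ t ∈ Finset.Icc 1 T, (1 / 2 : ℝ) * Real.log ((x₀.2 t).det) =
            (1/2 : ℝ) * S0 := e1
        rw [e1', e2]
        have : (1/2 : ℝ) * ∑ t ∈ Finset.Icc 1 T, Real.log ((y'.2 t).det) <
            (1/2 : ℝ) * S0 := by linarith
        linarith
      have hJz : J z ≤ J x₀ := isMinOn_iff.mp hzmin x₀ hx₀K
      calc J z ≤ J x₀ := hJz
        _ ≤ J y' := le_of_lt hJx₀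
        _ = J y := hy'J
  exact hgoal
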